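/- In the L-period model with history-independent cutoff thresholds (c₁, ..., c_L), the pseudo-true fundamentals admit the path-counting formula μᵢ* = μᵢ• + Σ_{j=1}^{i−1} (Σ_{p ∈ P[i→j]} W(p))·(μⱼ• − E[Xⱼ | Xⱼ ≤ cⱼ]), where P[i→j] is the set of strictly decreasing index paths from i to j and W(p) is the product of edge weights −γ_{k,m} along path p. -/

import Mathlib

open MeasureTheory Set

/-- Gaussian density with mean `a` and variance `s2`. -/
noncomputable def gauss (a s2 x : ℝ) : ℝ :=
  (Real.sqrt (2 * Real.pi * s2))⁻¹ * Real.exp (-(x - a) ^ 2 / (2 * s2))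

/-- Mean of a `N(a, s2)` random variable truncated above at `c`, i.e. `E[X | X ≤ c]`. -/
noncomputable def truncMean (a s2 c : ℝ) : ℝ :=
  (∫ x in Iic c, x * gauss a s2 x) / (∫ x in Iic c, gauss a s2 x)

/-- The weight of a path given as the list of its nodes: the product of the edge
weights `−γ_{a,b}` over consecutive nodes `a, b`. -/
noncomputable def listWeight (γ : ℕ → ℕ → ℝ) : List ℕ → ℝ
  | a :: b :: rest => (-(γ a b)) * listWeight γ (b :: rest)
  | _ => 1

/-- The total weight `Σ_{p ∈ P[i→j]} W(p)` over all strictly decreasing paths from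
`i` to `j`: each such path is identified with its set `S ⊆ (j, i)` of intermediate
nodes, traversed in decreasing order. -/
noncomputable def pathWeightSum (γ : ℕ → ℕ → ℝ) (i j : ℕ) : ℝ :=
  ∑ S ∈ (Finset.Ioo j i).powerset,
    listWeight γ (i :: ((S.sort (· ≤ ·)).reverse ++ [j]))

lemma sort_insert_max (S : Finset ℕ) (a : ℕ) (h : ∀ x ∈ S, x < a) :
    (insert a S).sort (· ≤ ·) = S.sort (· ≤ ·) ++ [a] := by
  have ha : a ∉ S := fun h' => lt_irrefl a (h a h')
  refine (fun hp h1 h2 => List.Perm.eq_of_pairwise' (r := (· ≤ ·)) h1 h2 hp) ?_ ?_ ?_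
  · rw [← Multiset.coe_eq_coe]
    rw [← Multiset.coe_add, Finset.sort_eq, Finset.insert_val_of_notMem ha]
    rw [Multiset.coe_singleton, ← Multiset.singleton_add, add_comm, Finset.sort_eq]
  · exact Finset.pairwise_sort _ _
  · rw [List.pairwise_append]
    refine ⟨Finset.pairwise_sort _ _, List.pairwise_singleton _ a, ?_⟩
    intro x hx y hy
    simp only [List.mem_singleton] at hy
    subst hy
    exact (h x ((Finset.mem_sort _).1 hx)).le

/-- The generalized path-weight sum with head `m` and intermediate nodes from `A`. -/
noncomputable def auxSum (γ : ℕ → ℕ → ℝ) (A : Finset ℕ) (m j : ℕ) : ℝ :=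
  ∑ S ∈ A.powerset, listWeight γ (m :: ((S.sort (· ≤ ·)).reverse ++ [j]))

lemma pathWeightSum_eq_auxSum (γ : ℕ → ℕ → ℝ) (i j : ℕ) :
    pathWeightSum γ i j = auxSum γ (Finset.Ioo j i) i j := rfl

lemma auxSum_insert (γ : ℕ → ℕ → ℝ) (A : Finset ℕ) (a m j : ℕ)
    (ha : ∀ x ∈ A, x < a) :
    auxSum γ (insert a A) m j = auxSum γ A m j + (-γ m a) * auxSum γ A a j := by
  have ha' : a ∉ A := fun h' => lt_irrefl a (ha a h')
  rw [auxSum, Finset.sum_powerset_insert ha']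
  congr 1
  rw [auxSum, Finset.mul_sum]
  apply Finset.sum_congr rfl
  intro S hS
  have hS' : ∀ x ∈ S, x < a := fun x hx =>
    ha x (Finset.mem_powerset.1 hS hx)
  rw [sort_insert_max S a hS', List.reverse_append, List.reverse_singleton,
    List.singleton_append, List.cons_append, listWeight]

lemma auxSum_Ioo (γ : ℕ → ℕ → ℝ) (m j : ℕ) : ∀ i,
    auxSum γ (Finset.Ioo j i) m j =
      -γ m j + ∑ k ∈ Finset.Ioo j i, (-γ m k) * pathWeightSum γ k j := by
  intro i
  induction i with
  | zero =>
      have h0 : Finset.Ioo j 0 = ∅ := by simp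
      simp [h0, auxSum, listWeight]
  | succ i ih =>
      by_cases h : j < i
      · have hins : Finset.Ioo j (i + 1) = insert i (Finset.Ioo j i) := by
          ext x; simp only [Finset.mem_Ioo, Finset.mem_insert]; omega
        have hni : i ∉ Finset.Ioo j i := by simp
        rw [hins, auxSum_insert γ _ i m j (fun x hx => (Finset.mem_Ioo.1 hx).2),
          ih, ← pathWeightSum_eq_auxSum, Finset.sum_insert hni]
        ring
      · have : Finset.Ioo j (i + 1) = Finset.Ioo j i := by
          ext x; simp only [Finset.mem_Ioo]; omega
        rw [this, ih]

lemma pws_rec (γ : ℕ → ℕ → ℝ) (i j : ℕ) :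
    pathWeightSum γ i j =
      -γ i j + ∑ k ∈ Finset.Ioo j i, (-γ i k) * pathWeightSum γ k j := by
  rw [pathWeightSum_eq_auxSum, auxSum_Ioo]

lemma triangle_swap (n : ℕ) (f : ℕ → ℕ → ℝ) :
    ∑ j ∈ Finset.range n, ∑ k ∈ Finset.range j, f j k =
      ∑ j ∈ Finset.range n, ∑ k ∈ Finset.Ioo j n, f k j := by
  have h := Finset.sum_Ico_Ico_comm' 0 n (fun a b => f b a)
  simp only [← Finset.range_eq_Ico, Finset.Ico_add_one_left_eq_Ioo] at h
  exact h.symm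

/-- In the `L`-period model with history-independent cutoffs `(c i)`, the pseudo-true
fundamentals, defined by the recursion
`μᵢ* = μᵢ• − Σ_{j<i} γ_{i,j}(μⱼ* − E[Xⱼ|Xⱼ ≤ cⱼ])`, admit the path-counting closed form
`μᵢ* = μᵢ• + Σ_{j<i} (Σ_{p ∈ P[i→j]} W(p))·(μⱼ• − E[Xⱼ|Xⱼ ≤ cⱼ])`. -/
theorem path_counting_formula (L : ℕ) (μb : ℕ → ℝ) (γ : ℕ → ℕ → ℝ) (s2 : ℝ)
    (hs2 : 0 < s2) (c : ℕ → ℝ) (μstar : ℕ → ℝ)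
    (hrec : ∀ i < L, μstar i =
      μb i - ∑ j ∈ Finset.range i, γ i j * (μstar j - truncMean (μb j) s2 (c j))) :
    ∀ i < L, μstar i =
      μb i + ∑ j ∈ Finset.range i,
        pathWeightSum γ i j * (μb j - truncMean (μb j) s2 (c j)) := by
  intro i
  induction i using Nat.strong_induction_on with
  | _ i IH =>
    intro hiL
    set d : ℕ → ℝ := fun k => μb k - truncMean (μb k) s2 (c k) with hd
    rw [hrec i hiL]
    have hterm : ∀ j ∈ Finset.range i,
        γ i j * (μstar j - truncMean (μb j) s2 (c j)) =
          γ i j * d j + ∑ k ∈ Finset.range j, γ i j * (pathWeightSum γ j k * d k) := by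
      intro j hj
      have hj' := Finset.mem_range.1 hj
      rw [IH j hj' (hj'.trans hiL), ← Finset.mul_sum, hd]
      ring
    rw [Finset.sum_congr rfl hterm, Finset.sum_add_distrib]
    have hswap := triangle_swap i (fun j k => γ i j * (pathWeightSum γ j k * d k))
    rw [hswap]
    have hR : ∀ j ∈ Finset.range i,
        pathWeightSum γ i j * d j =
          -(γ i j * d j) + ∑ k ∈ Finset.Ioo j i, -(γ i k * (pathWeightSum γ k j * d j)) := by
      intro j _
      rw [pws_rec γ i j, add_mul, Finset.sum_mul]
      congr 1
      · ring
      · exact Finset.sum_congr rfl fun k _ => by ring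
    have key : ∑ j ∈ Finset.range i, pathWeightSum γ i j * d j =
        -((∑ j ∈ Finset.range i, γ i j * d j) +
          ∑ j ∈ Finset.range i, ∑ k ∈ Finset.Ioo j i, γ i k * (pathWeightSum γ k j * d j)) := by
      rw [Finset.sum_congr rfl hR, Finset.sum_add_distrib]
      simp only [Finset.sum_neg_distrib]
      ring
    rw [key]
    ring
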